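/- Let U ⊆ ℂ^6 be open and let σ : (Fin 6 → ℂ) → ℂ be analytic and nonvanishing on U. Suppose that on all of U the Kleinian ℘-functions of σ satisfy the two relations ℘_{6666} = 6·℘_{66}² − 3·℘_{55} + 4·℘_{46} and ℘_{5666} = 6·℘_{56}·℘_{66} − 2·℘_{45}. Then on all of U the bilinear relation 0 = −℘_{555} + 2·℘_{456} + 2·℘_{566}·℘_{66} − 2·℘_{56}·℘_{666} holds. -/

import Mathlib

open scoped BigOperators

/-- Partial derivative in the `i`-th coordinate direction. -/
noncomputable def pd {g : ℕ} (i : Fin g) (f : (Fin g → ℂ) → ℂ) : (Fin g → ℂ) → ℂ :=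
  fun u => fderiv ℂ f u (Pi.single i 1)

/-- Iterated partial derivatives along a list of indices. -/
noncomputable def pdList {g : ℕ} (l : List (Fin g)) (f : (Fin g → ℂ) → ℂ) : (Fin g → ℂ) → ℂ :=
  l.foldr pd f

/-- The 2-index Kleinian ℘-function `℘_{ij} = (∂_iσ·∂_jσ − σ·∂_i∂_jσ)/σ²`. -/
noncomputable def wp2 {g : ℕ} (σ : (Fin g → ℂ) → ℂ) (i j : Fin g) : (Fin g → ℂ) → ℂ :=
  fun u => (pd i σ u * pd j σ u - σ u * pd i (pd j σ) u) / (σ u) ^ 2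

/-- The n-index Kleinian ℘-function `℘_{i j i₃ … iₙ} = ∂_{i₃}⋯∂_{iₙ} ℘_{ij}`. -/
noncomputable def wpN {g : ℕ} (σ : (Fin g → ℂ) → ℂ) (i j : Fin g) (rest : List (Fin g)) :
    (Fin g → ℂ) → ℂ :=
  pdList rest (wp2 σ i j)

/-- The diagonal value `(Δ_{i₁}⋯Δ_{iₙ} σ(u)σ(v))|_{v=u}
    = Σ_{S⊆{1,…,n}} (−1)^{|S|}·((∏_{k∈S}∂_{i_k})σ)(u)·((∏_{k∉S}∂_{i_k})σ)(u)`. -/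
noncomputable def hirotaDiag {g : ℕ} (σ : (Fin g → ℂ) → ℂ) (l : List (Fin g))
    (u : Fin g → ℂ) : ℂ :=
  ∑ S : Finset (Fin l.length),
    (-1 : ℂ) ^ S.card
      * pdList (((List.finRange l.length).filter (fun k => decide (k ∈ S))).map l.get) σ u
      * pdList (((List.finRange l.length).filter (fun k => decide (k ∉ S))).map l.get) σ u

/-- The n-index Q-function (n even): `Q_{i₁…iₙ}(u) = −(1/(2σ(u)²))·(Δ_{i₁}⋯Δ_{iₙ}σ(u)σ(v))|_{v=u}`. -/
noncomputable def Qfun {g : ℕ} (σ : (Fin g → ℂ) → ℂ) (l : List (Fin g))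
    (u : Fin g → ℂ) : ℂ :=
  -(1 / (2 * (σ u) ^ 2)) * hirotaDiag σ l u

section helpers
variable {n : ℕ} {U : Set (Fin n → ℂ)} {f h : (Fin n → ℂ) → ℂ} {u : Fin n → ℂ} {i j : Fin n}

lemma pd_congr (hU : IsOpen U) (hfh : ∀ v ∈ U, f v = h v) (hu : u ∈ U) (i : Fin n) :
    pd i f u = pd i h u := by
  unfold pd
  rw [Filter.EventuallyEq.fderiv_eq (Filter.eventuallyEq_of_mem (hU.mem_nhds hu) hfh)]

lemma pd_neg (i : Fin n) (u : Fin n → ℂ) : pd i (fun v => -f v) u = -pd i f u := by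
  unfold pd; rw [fderiv_fun_neg]; simp

lemma pd_sub (hf : DifferentiableAt ℂ f u) (hh : DifferentiableAt ℂ h u) (i : Fin n) :
    pd i (fun v => f v - h v) u = pd i f u - pd i h u := by
  unfold pd; rw [fderiv_fun_sub hf hh]; simp

lemma pd_add (hf : DifferentiableAt ℂ f u) (hh : DifferentiableAt ℂ h u) (i : Fin n) :
    pd i (fun v => f v + h v) u = pd i f u + pd i h u := by
  unfold pd; rw [fderiv_fun_add hf hh]; simp

lemma pd_mul (hf : DifferentiableAt ℂ f u) (hh : DifferentiableAt ℂ h u) (i : Fin n) :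
    pd i (fun v => f v * h v) u = pd i f u * h u + f u * pd i h u := by
  unfold pd; rw [fderiv_fun_mul hf hh]; simp [smul_eq_mul]; ring

lemma pd_const_mul (hf : DifferentiableAt ℂ f u) (c : ℂ) (i : Fin n) :
    pd i (fun v => c * f v) u = c * pd i f u := by
  have := pd_mul (f := fun _ => c) (h := f) (differentiableAt_const c) hf i
  simpa [pd, fderiv_const] using this

lemma pd_pow2 (hf : DifferentiableAt ℂ f u) (i : Fin n) :
    pd i (fun v => f v ^ 2) u = 2 * f u * pd i f u := by
  have h2 : (fun v => f v ^ 2) = fun v => f v * f v := by ext v; ring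
  rw [h2, pd_mul hf hf]; ring

lemma pd_inv (hh : DifferentiableAt ℂ h u) (h0 : h u ≠ 0) (i : Fin n) :
    pd i (fun v => (h v)⁻¹) u = -(pd i h u / h u ^ 2) := by
  unfold pd
  have hc : HasFDerivAt (fun v => (h v)⁻¹)
      ((-ContinuousLinearMap.mulLeftRight ℂ ℂ (h u)⁻¹ (h u)⁻¹).comp (fderiv ℂ h u)) u :=
    (hasFDerivAt_inv' (𝕜 := ℂ) h0).comp u hh.hasFDerivAt
  rw [hc.fderiv]
  simp only [ContinuousLinearMap.comp_apply, ContinuousLinearMap.neg_apply,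
    ContinuousLinearMap.mulLeftRight_apply]
  field_simp

lemma pd_div (hf : DifferentiableAt ℂ f u) (hh : DifferentiableAt ℂ h u) (h0 : h u ≠ 0)
    (i : Fin n) :
    pd i (fun v => f v / h v) u = (pd i f u * h u - f u * pd i h u) / h u ^ 2 := by
  have hd : (fun v => f v / h v) = fun v => f v * (h v)⁻¹ := by ext v; rw [div_eq_mul_inv]
  rw [hd, pd_mul hf (hh.fun_inv h0), pd_inv hh h0]
  field_simp
  ring

lemma analyticOnNhd_pd (hf : AnalyticOnNhd ℂ f U) (i : Fin n) :
    AnalyticOnNhd ℂ (pd i f) U := by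
  have := (ContinuousLinearMap.apply ℂ ℂ (Pi.single i 1)).comp_analyticOnNhd hf.fderiv
  exact this

lemma pd_comm (hU : IsOpen U) (hf : AnalyticOnNhd ℂ f U) (hu : u ∈ U) (i j : Fin n) :
    pd i (pd j f) u = pd j (pd i f) u := by
  have hd : DifferentiableAt ℂ (fderiv ℂ f) u := (hf.fderiv u hu).differentiableAt
  have hsymm : IsSymmSndFDerivAt ℂ f u :=
    ((hf u hu).contDiffAt (n := 2)).isSymmSndFDerivAt (by simp)
  have key : ∀ a b : Fin n,
      pd a (pd b f) u = fderiv ℂ (fderiv ℂ f) u (Pi.single a 1) (Pi.single b 1) := by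
    intro a b
    show fderiv ℂ (fun v => (fderiv ℂ f v) (Pi.single b 1)) u (Pi.single a 1) = _
    rw [fderiv_clm_apply hd (differentiableAt_const _)]
    simp
  rw [key, key, hsymm]
end helpers

section wp
variable {n : ℕ} {U : Set (Fin n → ℂ)} {σ : (Fin n → ℂ) → ℂ} {u : Fin n → ℂ}
variable (hU : IsOpen U) (hσ : AnalyticOnNhd ℂ σ U) (hσ0 : ∀ v ∈ U, σ v ≠ 0)
include hU hσ hσ0

lemma logd_analytic (j : Fin n) : AnalyticOnNhd ℂ (fun v => pd j σ v / σ v) U :=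
  (analyticOnNhd_pd hσ j).div hσ hσ0

lemma wp2_analytic (i j : Fin n) : AnalyticOnNhd ℂ (wp2 σ i j) U := by
  have h1 : AnalyticOnNhd ℂ (fun v => pd i σ v * pd j σ v - σ v * pd i (pd j σ) v) U :=
    ((analyticOnNhd_pd hσ i).mul (analyticOnNhd_pd hσ j)).sub
      (hσ.mul (analyticOnNhd_pd (analyticOnNhd_pd hσ j) i))
  exact h1.div (hσ.pow 2) (fun v hv => pow_ne_zero _ (hσ0 v hv))

lemma wp2_eq (hu : u ∈ U) (i j : Fin n) :
    wp2 σ i j u = -pd i (fun v => pd j σ v / σ v) u := by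
  rw [pd_div ((analyticOnNhd_pd hσ j u hu).differentiableAt) ((hσ u hu).differentiableAt)
    (hσ0 u hu)]
  show (pd i σ u * pd j σ u - σ u * pd i (pd j σ) u) / σ u ^ 2 = _
  field_simp
  ring

lemma pd_logd (hu : u ∈ U) (i j : Fin n) :
    pd i (fun v => pd j σ v / σ v) u = -wp2 σ i j u := by
  rw [wp2_eq hU hσ hσ0 hu, neg_neg]

lemma wp2_symm (hu : u ∈ U) (i j : Fin n) : wp2 σ i j u = wp2 σ j i u := by
  show (pd i σ u * pd j σ u - σ u * pd i (pd j σ) u) / σ u ^ 2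
    = (pd j σ u * pd i σ u - σ u * pd j (pd i σ) u) / σ u ^ 2
  rw [pd_comm hU hσ hu i j]; ring

lemma pd_wp2_swap (hu : u ∈ U) (i j k : Fin n) :
    pd k (wp2 σ i j) u = pd i (wp2 σ k j) u := by
  have hLj : AnalyticOnNhd ℂ (fun v => pd j σ v / σ v) U := logd_analytic hU hσ hσ0 j
  calc pd k (wp2 σ i j) u
      = pd k (fun v => -pd i (fun w => pd j σ w / σ w) v) u :=
        pd_congr hU (fun v hv => wp2_eq hU hσ hσ0 hv i j) hu k
    _ = -pd k (pd i (fun w => pd j σ w / σ w)) u := pd_neg k u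
    _ = -pd i (pd k (fun w => pd j σ w / σ w)) u := by rw [pd_comm hU hLj hu]
    _ = -pd i (fun v => -wp2 σ k j v) u := by
        rw [pd_congr hU (fun v hv => pd_logd hU hσ hσ0 hv k j) hu i]
    _ = pd i (wp2 σ k j) u := by rw [pd_neg]; ring

end wp

theorem main (U : Set (Fin 6 → ℂ)) (hU : IsOpen U)
    (σ : (Fin 6 → ℂ) → ℂ) (hσ : AnalyticOnNhd ℂ σ U) (hσ0 : ∀ u ∈ U, σ u ≠ 0)
    (hrel1 : ∀ u ∈ U,
      pdList [5, 5] (wp2 σ 5 5) u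
        = 6 * (wp2 σ 5 5 u) ^ 2 - 3 * wp2 σ 4 4 u + 4 * wp2 σ 3 5 u)
    (hrel2 : ∀ u ∈ U,
      pdList [5, 5] (wp2 σ 4 5) u
        = 6 * wp2 σ 4 5 u * wp2 σ 5 5 u - 2 * wp2 σ 3 4 u) :
    ∀ u ∈ U,
      0 = - pd 4 (wp2 σ 4 4) u + 2 * pd 5 (wp2 σ 3 4) u
          + 2 * pd 5 (wp2 σ 4 5) u * wp2 σ 5 5 u
          - 2 * wp2 σ 4 5 u * pd 5 (wp2 σ 5 5) u := by
  intro u hu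
  set W := wp2 σ 5 5 with hWdef
  set V := wp2 σ 4 5 with hVdef
  have hW : AnalyticOnNhd ℂ W U := wp2_analytic hU hσ hσ0 5 5
  have hV : AnalyticOnNhd ℂ V U := wp2_analytic hU hσ hσ0 4 5
  have hP44 : AnalyticOnNhd ℂ (wp2 σ 4 4) U := wp2_analytic hU hσ hσ0 4 4
  have hP35 : AnalyticOnNhd ℂ (wp2 σ 3 5) U := wp2_analytic hU hσ hσ0 3 5
  have hP34 : AnalyticOnNhd ℂ (wp2 σ 3 4) U := wp2_analytic hU hσ hσ0 3 4
  have dW : DifferentiableAt ℂ W u := (hW u hu).differentiableAt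
  have dV : DifferentiableAt ℂ V u := (hV u hu).differentiableAt
  have dP44 : DifferentiableAt ℂ (wp2 σ 4 4) u := (hP44 u hu).differentiableAt
  have dP35 : DifferentiableAt ℂ (wp2 σ 3 5) u := (hP35 u hu).differentiableAt
  have dP34 : DifferentiableAt ℂ (wp2 σ 3 4) u := (hP34 u hu).differentiableAt
  -- Step A : pd 4 (pd 5 (pd 5 W)) u = pd 5 (pd 5 (pd 5 V)) u
  have swapWV : ∀ v ∈ U, pd 4 W v = pd 5 V v := fun v hv => pd_wp2_swap hU hσ hσ0 hv 5 5 4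
  have a2 : ∀ v ∈ U, pd 4 (pd 5 W) v = pd 5 (pd 5 V) v := by
    intro v hv
    rw [pd_comm hU hW hv 4 5, pd_congr hU swapWV hv 5]
  have stepA : pd 4 (pd 5 (pd 5 W)) u = pd 5 (pd 5 (pd 5 V)) u := by
    rw [pd_comm hU (analyticOnNhd_pd hW 5) hu 4 5, pd_congr hU a2 hu 5]
  -- E4 : pd 4 (wp2 σ 3 5) u = pd 5 (wp2 σ 3 4) u
  have e4 : pd 4 (wp2 σ 3 5) u = pd 5 (wp2 σ 3 4) u := by
    rw [pd_congr hU (fun v hv => wp2_symm hU hσ hσ0 hv 3 5) hu 4,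
      pd_wp2_swap hU hσ hσ0 hu 5 3 4,
      pd_congr hU (fun v hv => wp2_symm hU hσ hσ0 hv 4 3) hu 5]
  -- E1 : expand pd 4 of rel1
  have e1 : pd 4 (pdList [5, 5] W) u
      = 12 * W u * pd 5 V u - 3 * pd 4 (wp2 σ 4 4) u + 4 * pd 5 (wp2 σ 3 4) u := by
    rw [pd_congr hU hrel1 hu 4]
    rw [pd_add (((differentiableAt_const (6:ℂ)).fun_mul (dW.fun_pow 2)).fun_sub
        ((differentiableAt_const (3:ℂ)).fun_mul dP44))
        ((differentiableAt_const (4:ℂ)).fun_mul dP35) 4]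
    rw [pd_sub ((differentiableAt_const (6:ℂ)).fun_mul (dW.fun_pow 2))
        ((differentiableAt_const (3:ℂ)).fun_mul dP44) 4]
    rw [pd_const_mul (dW.fun_pow 2) 6 4, pd_const_mul dP44 3 4, pd_const_mul dP35 4 4]
    rw [pd_pow2 dW 4, e4, swapWV u hu]
    ring
  -- E2 : expand pd 5 of rel2
  have e2 : pd 5 (pdList [5, 5] V) u
      = 6 * pd 5 V u * W u + 6 * V u * pd 5 W u - 2 * pd 5 (wp2 σ 3 4) u := by
    rw [pd_congr hU hrel2 hu 5]
    rw [pd_sub (((differentiableAt_const (6:ℂ)).fun_mul dV).fun_mul dW)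
        ((differentiableAt_const (2:ℂ)).fun_mul dP34) 5]
    rw [pd_mul ((differentiableAt_const (6:ℂ)).fun_mul dV) dW 5]
    rw [pd_const_mul dV 6 5, pd_const_mul dP34 2 5]
  have key : pd 4 (pdList [5, 5] W) u = pd 5 (pdList [5, 5] V) u := by
    show pd 4 (pd 5 (pd 5 W)) u = pd 5 (pd 5 (pd 5 V)) u
    exact stepA
  rw [e1, e2] at key
  linear_combination -key / 3


/-- a bilinear relation between 2- and 3-index ℘-functions obtained by cross
differentiating the relations for `℘₆₆₆₆` and `℘₅₆₆₆`.
Indices: `u₆, u₅, u₄` are the coordinates `5, 4, 3 : Fin 6`. -/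
theorem bilinear_relation_weight_six (U : Set (Fin 6 → ℂ)) (hU : IsOpen U)
    (σ : (Fin 6 → ℂ) → ℂ) (hσ : AnalyticOnNhd ℂ σ U) (hσ0 : ∀ u ∈ U, σ u ≠ 0)
    (hrel1 : ∀ u ∈ U,
      wpN σ 5 5 [5, 5] u
        = 6 * (wp2 σ 5 5 u) ^ 2 - 3 * wp2 σ 4 4 u + 4 * wp2 σ 3 5 u)
    (hrel2 : ∀ u ∈ U,
      wpN σ 4 5 [5, 5] u
        = 6 * wp2 σ 4 5 u * wp2 σ 5 5 u - 2 * wp2 σ 3 4 u) :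
    ∀ u ∈ U,
      0 = - wpN σ 4 4 [4] u + 2 * wpN σ 3 4 [5] u
          + 2 * wpN σ 4 5 [5] u * wp2 σ 5 5 u
          - 2 * wp2 σ 4 5 u * wpN σ 5 5 [5] u := by
  intro u hu
  have := main U hU σ hσ hσ0 hrel1 hrel2 u hu
  simpa [wpN, pdList] using this
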